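/- Let T > 0 and r' > r > 0. Then there is no constant C > 0 such that every solution u of the heat equation with initial datum in L²(ℝⁿ) satisfies ∫_{B_{r'}} u(T,x)² dx ≤ C ∫_0^T ∫_{B_r} u(t,x)² dx dt. Equivalently, for every C > 0 there exists u₀ ∈ L²(ℝⁿ) whose heat-equation solution u violates this inequality; indeed the translated Gaussians u_k(t,x) = (4π(t+1))^{−n/2} exp(−(|x₁−k|² + |x'|²)/(4(t+1))) satisfy ∫_0^T ∫_{B_r} u_k² dx dt / ∫_{B_{r'}} u_k(T,·)² dx → 0 as k → ∞. -/

import Mathlib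

open MeasureTheory Real Set Filter

noncomputable section

/-- The solution of the heat equation `∂ₜu − Δu = 0` with initial datum `u₀`,
given by convolution with the heat kernel. -/
def heatSol (n : ℕ) (u₀ : EuclideanSpace ℝ (Fin n) → ℝ) (t : ℝ)
    (x : EuclideanSpace ℝ (Fin n)) : ℝ :=
  ∫ y, (4 * π * t) ^ (-(n : ℝ) / 2) * Real.exp (-‖x - y‖ ^ 2 / (4 * t)) * u₀ y

/-- The translated Gaussian solution `u_k(t,x) = (4π(t+1))^{-n/2}
exp(−|x − k e₁|²/(4(t+1)))`, where `e₁` is the first coordinate vector. -/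
def gaussSol (n : ℕ) (hn : 0 < n) (k : ℕ) (t : ℝ) (x : EuclideanSpace ℝ (Fin n)) : ℝ :=
  (4 * π * (t + 1)) ^ (-(n : ℝ) / 2) *
    Real.exp (-‖x - (k : ℝ) • EuclideanSpace.single (⟨0, hn⟩ : Fin n) (1 : ℝ)‖ ^ 2 /
      (4 * (t + 1)))

lemma integrable_gauss (n : ℕ) {b : ℝ} (hb : 0 < b) (c : EuclideanSpace ℝ (Fin n)) :
    Integrable (fun y : EuclideanSpace ℝ (Fin n) => rexp (-b * ‖y - c‖ ^ 2)) := by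
  have h0 : Integrable (fun v : EuclideanSpace ℝ (Fin n) => rexp (-b * ‖v‖ ^ 2)) := by
    have h := (GaussianFourier.integrable_cexp_neg_mul_sq_norm_add
      (V := EuclideanSpace ℝ (Fin n)) (b := (b : ℂ)) (by simpa using hb) 0 0).norm
    have : (fun v : EuclideanSpace ℝ (Fin n) =>
        ‖Complex.exp (-(b:ℂ) * ‖v‖ ^ 2 + 0 * (inner ℝ (0 : EuclideanSpace ℝ (Fin n)) v : ℝ))‖)
        = fun v => rexp (-b * ‖v‖ ^ 2) := by
      funext v
      simp [Complex.norm_exp, ← Complex.ofReal_pow]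
    rwa [this] at h
  exact h0.comp_sub_right c

lemma integral_gauss (n : ℕ) {b : ℝ} (hb : 0 < b) (c : EuclideanSpace ℝ (Fin n)) :
    ∫ y : EuclideanSpace ℝ (Fin n), rexp (-b * ‖y - c‖ ^ 2) = (π / b) ^ ((n : ℝ) / 2) := by
  rw [integral_sub_right_eq_self (fun y : EuclideanSpace ℝ (Fin n) => rexp (-b * ‖y‖ ^ 2)) c]
  rw [GaussianFourier.integral_rexp_neg_mul_sq_norm hb, finrank_euclideanSpace_fin]

lemma key_sq {n : ℕ} (t : ℝ) (ht : 0 < t) (x c y : EuclideanSpace ℝ (Fin n)) :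
    ‖x - y‖ ^ 2 / (4 * t) + ‖y - c‖ ^ 2 / 4
      = ((t + 1) / (4 * t)) * ‖y - ((1 / (t + 1)) • x + (t / (t + 1)) • c)‖ ^ 2
        + ‖x - c‖ ^ 2 / (4 * (t + 1)) := by
  have ht1 : t + 1 ≠ 0 := by positivity
  simp only [← real_inner_self_eq_norm_sq, inner_sub_left, inner_sub_right, inner_add_left,
    inner_add_right, real_inner_smul_left, real_inner_smul_right]
  rw [real_inner_comm y x, real_inner_comm c x, real_inner_comm c y]
  field_simp
  ring

lemma heat_conv (n : ℕ) {t : ℝ} (ht : 0 < t) (x c : EuclideanSpace ℝ (Fin n)) :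
    (∫ y : EuclideanSpace ℝ (Fin n), (4 * π * t) ^ (-(n : ℝ) / 2) *
        Real.exp (-‖x - y‖ ^ 2 / (4 * t)) *
        ((4 * π) ^ (-(n : ℝ) / 2) * Real.exp (-‖y - c‖ ^ 2 / 4)))
      = (4 * π * (t + 1)) ^ (-(n : ℝ) / 2) * Real.exp (-‖x - c‖ ^ 2 / (4 * (t + 1))) := by
  have hπ := Real.pi_pos
  have ht1 : (0:ℝ) < t + 1 := by linarith
  set b : ℝ := (t + 1) / (4 * t) with hbdef
  have hb : 0 < b := by positivity
  set m : EuclideanSpace ℝ (Fin n) := (1 / (t + 1)) • x + (t / (t + 1)) • c with hmdef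
  have hpt : ∀ y : EuclideanSpace ℝ (Fin n),
      (4 * π * t) ^ (-(n : ℝ) / 2) * Real.exp (-‖x - y‖ ^ 2 / (4 * t)) *
        ((4 * π) ^ (-(n : ℝ) / 2) * Real.exp (-‖y - c‖ ^ 2 / 4))
      = ((4 * π * t) ^ (-(n : ℝ) / 2) * (4 * π) ^ (-(n : ℝ) / 2) *
          Real.exp (-‖x - c‖ ^ 2 / (4 * (t + 1)))) * Real.exp (-b * ‖y - m‖ ^ 2) := by
    intro y
    have e : Real.exp (-‖x - y‖ ^ 2 / (4 * t)) * Real.exp (-‖y - c‖ ^ 2 / 4)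
        = Real.exp (-‖x - c‖ ^ 2 / (4 * (t + 1))) * Real.exp (-b * ‖y - m‖ ^ 2) := by
      rw [← Real.exp_add, ← Real.exp_add]
      congr 1
      have h := key_sq t ht x c y
      rw [hbdef, hmdef]
      field_simp at h ⊢
      nlinarith [h]
    calc (4 * π * t) ^ (-(n : ℝ) / 2) * Real.exp (-‖x - y‖ ^ 2 / (4 * t)) *
        ((4 * π) ^ (-(n : ℝ) / 2) * Real.exp (-‖y - c‖ ^ 2 / 4))
        = (4 * π * t) ^ (-(n : ℝ) / 2) * (4 * π) ^ (-(n : ℝ) / 2) *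
            (Real.exp (-‖x - y‖ ^ 2 / (4 * t)) * Real.exp (-‖y - c‖ ^ 2 / 4)) := by ring
      _ = _ := by rw [e]; ring
  simp_rw [hpt]
  rw [MeasureTheory.integral_const_mul, integral_gauss n hb m]
  have hfin : (4 * π * t) ^ (-(n : ℝ) / 2) * (4 * π) ^ (-(n : ℝ) / 2) * (π / b) ^ ((n : ℝ) / 2)
      = (4 * π * (t + 1)) ^ (-(n : ℝ) / 2) := by
    simp only [neg_div]
    have hC : (0:ℝ) < π / b := by positivity
    have h1 : (π / b) ^ ((n : ℝ) / 2) = ((π / b)⁻¹) ^ (-((n : ℝ) / 2)) := by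
      rw [Real.rpow_neg (by positivity), Real.inv_rpow (by positivity), inv_inv]
    rw [h1, ← Real.mul_rpow (by positivity) (by positivity),
      ← Real.mul_rpow (by positivity) (by positivity)]
    congr 1
    rw [hbdef]
    field_simp
  calc (4 * π * t) ^ (-(n : ℝ) / 2) * (4 * π) ^ (-(n : ℝ) / 2) *
        Real.exp (-‖x - c‖ ^ 2 / (4 * (t + 1))) * (π / b) ^ ((n : ℝ) / 2)
      = ((4 * π * t) ^ (-(n : ℝ) / 2) * (4 * π) ^ (-(n : ℝ) / 2) * (π / b) ^ ((n : ℝ) / 2)) *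
        Real.exp (-‖x - c‖ ^ 2 / (4 * (t + 1))) := by ring
    _ = _ := by rw [hfin]

lemma rpow_neg_le {x y : ℝ} (e : ℝ) (hx : 0 < x) (hxy : x ≤ y) (he : 0 ≤ e) :
    y ^ (-e) ≤ x ^ (-e) := by
  rw [Real.rpow_neg hx.le, Real.rpow_neg (hx.trans_le hxy).le]
  exact inv_anti₀ (Real.rpow_pos_of_pos hx e) (Real.rpow_le_rpow hx.le hxy he)

lemma gauss_nonneg {n : ℕ} (hn : 0 < n) (k : ℕ) {t : ℝ} (ht : 0 ≤ t)
    (x : EuclideanSpace ℝ (Fin n)) : 0 ≤ gaussSol n hn k t x := by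
  have hπ := Real.pi_pos
  unfold gaussSol
  have h1 : (0:ℝ) ≤ 4 * π * (t + 1) := by nlinarith
  positivity

lemma gauss_cont {n : ℕ} (hn : 0 < n) (k : ℕ) (t : ℝ) :
    Continuous (fun x : EuclideanSpace ℝ (Fin n) => gaussSol n hn k t x) := by
  unfold gaussSol
  exact continuous_const.mul (Real.continuous_exp.comp
    ((((continuous_id.sub continuous_const).norm.pow 2).neg).div_const _))

lemma norm_center {n : ℕ} (hn : 0 < n) (a : ℝ) :
    ‖a • EuclideanSpace.single (⟨0, hn⟩ : Fin n) (1 : ℝ)‖ = |a| := by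
  rw [norm_smul, EuclideanSpace.norm_single]
  simp

lemma gauss_le {n : ℕ} (hn : 0 < n) (k : ℕ) {t T r : ℝ} (h0t : 0 ≤ t) (htT : t ≤ T)
    {x : EuclideanSpace ℝ (Fin n)} (hx : ‖x‖ ≤ r) (hrk : r ≤ (k : ℝ)) (hr : 0 ≤ r) :
    gaussSol n hn k t x ≤ (4 * π) ^ (-(n : ℝ) / 2) * rexp (-((k : ℝ) - r) ^ 2 / (4 * (T + 1))) := by
  have hπ := Real.pi_pos
  unfold gaussSol
  have hA : (4 * π * (t + 1)) ^ (-(n : ℝ) / 2) ≤ (4 * π) ^ (-(n : ℝ) / 2) := by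
    rw [neg_div]
    exact rpow_neg_le _ (by positivity) (by nlinarith) (by positivity)
  have hdist : (k : ℝ) - r ≤ ‖x - (k : ℝ) • EuclideanSpace.single (⟨0, hn⟩ : Fin n) (1 : ℝ)‖ := by
    have h1 : ‖(k : ℝ) • EuclideanSpace.single (⟨0, hn⟩ : Fin n) (1 : ℝ)‖ - ‖x‖
        ≤ ‖x - (k : ℝ) • EuclideanSpace.single (⟨0, hn⟩ : Fin n) (1 : ℝ)‖ := by
      rw [norm_sub_rev]
      exact norm_sub_norm_le _ _
    rw [norm_center hn, abs_of_nonneg (by positivity)] at h1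
    linarith
  have hE : rexp (-‖x - (k : ℝ) • EuclideanSpace.single (⟨0, hn⟩ : Fin n) (1 : ℝ)‖ ^ 2 /
      (4 * (t + 1))) ≤ rexp (-((k : ℝ) - r) ^ 2 / (4 * (T + 1))) := by
    rw [Real.exp_le_exp, neg_div, neg_div, neg_le_neg_iff]
    have hsq : ((k : ℝ) - r) ^ 2
        ≤ ‖x - (k : ℝ) • EuclideanSpace.single (⟨0, hn⟩ : Fin n) (1 : ℝ)‖ ^ 2 :=
      pow_le_pow_left₀ (by linarith) hdist 2
    apply div_le_div₀ (by positivity) hsq (by positivity) (by linarith)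
  exact mul_le_mul hA hE (Real.exp_nonneg _) (by positivity)

lemma gauss_ge {n : ℕ} (hn : 0 < n) (k : ℕ) {T r δ : ℝ} (hT : 0 ≤ T) (hδ : 0 ≤ δ)
    (hr : 0 ≤ r) (hk : r + 2 * δ ≤ (k : ℝ)) {x : EuclideanSpace ℝ (Fin n)}
    (hx : ‖x - (r + 2 * δ) • EuclideanSpace.single (⟨0, hn⟩ : Fin n) (1 : ℝ)‖ ≤ δ) :
    (4 * π * (T + 1)) ^ (-(n : ℝ) / 2) * rexp (-((k : ℝ) - r - δ) ^ 2 / (4 * (T + 1)))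
      ≤ gaussSol n hn k T x := by
  have hπ := Real.pi_pos
  unfold gaussSol
  have hd : ‖x - (k : ℝ) • EuclideanSpace.single (⟨0, hn⟩ : Fin n) (1 : ℝ)‖
      ≤ (k : ℝ) - r - δ := by
    have h1 := norm_sub_le (x - (r + 2 * δ) • EuclideanSpace.single (⟨0, hn⟩ : Fin n) (1 : ℝ))
      ((k : ℝ) • EuclideanSpace.single (⟨0, hn⟩ : Fin n) (1 : ℝ)
        - (r + 2 * δ) • EuclideanSpace.single (⟨0, hn⟩ : Fin n) (1 : ℝ))
    have h2 : x - (r + 2 * δ) • EuclideanSpace.single (⟨0, hn⟩ : Fin n) (1 : ℝ)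
        - ((k : ℝ) • EuclideanSpace.single (⟨0, hn⟩ : Fin n) (1 : ℝ)
          - (r + 2 * δ) • EuclideanSpace.single (⟨0, hn⟩ : Fin n) (1 : ℝ))
        = x - (k : ℝ) • EuclideanSpace.single (⟨0, hn⟩ : Fin n) (1 : ℝ) := by abel
    rw [h2] at h1
    have h3 : (k : ℝ) • EuclideanSpace.single (⟨0, hn⟩ : Fin n) (1 : ℝ)
        - (r + 2 * δ) • EuclideanSpace.single (⟨0, hn⟩ : Fin n) (1 : ℝ)
        = ((k : ℝ) - (r + 2 * δ)) • EuclideanSpace.single (⟨0, hn⟩ : Fin n) (1 : ℝ) := by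
      rw [sub_smul]
    rw [h3, norm_center hn, abs_of_nonneg (by linarith)] at h1
    linarith
  have hE : rexp (-((k : ℝ) - r - δ) ^ 2 / (4 * (T + 1)))
      ≤ rexp (-‖x - (k : ℝ) • EuclideanSpace.single (⟨0, hn⟩ : Fin n) (1 : ℝ)‖ ^ 2 /
        (4 * (T + 1))) := by
    rw [Real.exp_le_exp, neg_div, neg_div, neg_le_neg_iff]
    have hsq : ‖x - (k : ℝ) • EuclideanSpace.single (⟨0, hn⟩ : Fin n) (1 : ℝ)‖ ^ 2
        ≤ ((k : ℝ) - r - δ) ^ 2 := pow_le_pow_left₀ (norm_nonneg _) hd 2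
    exact div_le_div_of_nonneg_right hsq (by positivity)
  exact mul_le_mul_of_nonneg_left hE (by positivity)

set_option maxHeartbeats 2000000 in
/-- There is no observability inequality recovering the solution on a larger ball
`B_{r'}` from observations on a smaller ball `B_r`; indeed the translated Gaussians
witness the failure. -/
theorem no_observability_larger_ball (n : ℕ) (hn : 0 < n)
    (T : ℝ) (hT : 0 < T) (r r' : ℝ) (hr : 0 < r) (hrr' : r < r') :
    (¬ ∃ C > (0:ℝ), ∀ u₀ : EuclideanSpace ℝ (Fin n) → ℝ, MemLp u₀ 2 volume →
      ∫ x in Metric.ball 0 r', heatSol n u₀ T x ^ 2 ≤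
        C * ∫ t in Ioo (0:ℝ) T, ∫ x in Metric.ball 0 r, heatSol n u₀ t x ^ 2) ∧
    Tendsto
      (fun k : ℕ =>
        (∫ t in Ioo (0:ℝ) T, ∫ x in Metric.ball 0 r, gaussSol n hn k t x ^ 2) /
          ∫ x in Metric.ball 0 r', gaussSol n hn k T x ^ 2)
      atTop (nhds 0) := by
  have hπ := Real.pi_pos
  set e₁ : EuclideanSpace ℝ (Fin n) := EuclideanSpace.single (⟨0, hn⟩ : Fin n) (1 : ℝ) with he₁
  set δ : ℝ := (r' - r) / 4 with hδdef
  have hδ : 0 < δ := by rw [hδdef]; linarith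
  have hr4 : r' = r + 4 * δ := by rw [hδdef]; ring
  set z : EuclideanSpace ℝ (Fin n) := (r + 2 * δ) • e₁ with hzdef
  -- abbreviations
  set N : ℕ → ℝ := fun k =>
    ∫ t in Ioo (0:ℝ) T, ∫ x in Metric.ball 0 r, gaussSol n hn k t x ^ 2 with hNdef
  set D : ℕ → ℝ := fun k => ∫ x in Metric.ball 0 r', gaussSol n hn k T x ^ 2 with hDdef
  set volr : ℝ := (volume (Metric.ball (0 : EuclideanSpace ℝ (Fin n)) r)).toReal with hvolrdef
  set volδ : ℝ := (volume (Metric.ball z δ)).toReal with hvolδdef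
  have hvolδ : 0 < volδ :=
    ENNReal.toReal_pos (Metric.measure_ball_pos _ _ hδ).ne' measure_ball_lt_top.ne
  have hvolr : 0 ≤ volr := ENNReal.toReal_nonneg
  set A : ℝ := (4 * π) ^ (-(n : ℝ) / 2) with hAdef
  set B : ℝ := (4 * π * (T + 1)) ^ (-(n : ℝ) / 2) with hBdef
  have hA : 0 < A := Real.rpow_pos_of_pos (by positivity) _
  have hB : 0 < B := Real.rpow_pos_of_pos (by positivity) _
  set Mk : ℕ → ℝ := fun k => A * rexp (-((k : ℝ) - r) ^ 2 / (4 * (T + 1))) with hMkdef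
  set Lk : ℕ → ℝ := fun k => B * rexp (-((k : ℝ) - r - δ) ^ 2 / (4 * (T + 1))) with hLkdef
  have hLkpos : ∀ k, 0 < Lk k := fun k => by positivity
  have hMknn : ∀ k, 0 ≤ Mk k := fun k => by positivity
  -- nonnegativity of N
  have hNnn : ∀ k, 0 ≤ N k := fun k =>
    setIntegral_nonneg measurableSet_Ioo fun t _ =>
      setIntegral_nonneg measurableSet_ball fun x _ => sq_nonneg _
  -- numerator upper bound
  have hNub : ∀ k : ℕ, r' ≤ (k : ℝ) → N k ≤ Mk k ^ 2 * volr * T := by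
    intro k hk
    have hrk : r ≤ (k : ℝ) := le_trans hrr'.le hk
    have hinner : ∀ t ∈ Ioo (0:ℝ) T,
        ‖∫ x in Metric.ball (0 : EuclideanSpace ℝ (Fin n)) r, gaussSol n hn k t x ^ 2‖
          ≤ Mk k ^ 2 * volr := by
      intro t ht
      have := norm_setIntegral_le_of_norm_le_const (C := Mk k ^ 2) (μ := volume)
        (measure_ball_lt_top (x := (0 : EuclideanSpace ℝ (Fin n))) (r := r))
        (f := fun x => gaussSol n hn k t x ^ 2) ?_
      · exact this
      · intro x hx
        rw [Real.norm_eq_abs, abs_of_nonneg (sq_nonneg _)]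
        have hle := gauss_le hn k ht.1.le ht.2.le
          (le_of_lt (mem_ball_zero_iff.1 hx)) hrk hr.le
        exact pow_le_pow_left₀ (gauss_nonneg hn k ht.1.le x) hle 2
    -- measurability of the inner integral in t
    have hjm : StronglyMeasurable
        (fun p : ℝ × EuclideanSpace ℝ (Fin n) => gaussSol n hn k p.1 p.2 ^ 2) := by
      apply Measurable.stronglyMeasurable
      unfold gaussSol
      have h1 : Measurable fun p : ℝ × EuclideanSpace ℝ (Fin n) =>
          (4 * π * (p.1 + 1)) ^ (-(n : ℝ) / 2) :=
        (((measurable_fst.add_const 1).const_mul (4 * π)).pow_const (-(n : ℝ) / 2))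
      have h2 : Measurable fun p : ℝ × EuclideanSpace ℝ (Fin n) =>
          rexp (-‖p.2 - (k : ℝ) • e₁‖ ^ 2 / (4 * (p.1 + 1))) := by
        apply Real.measurable_exp.comp
        exact (((continuous_snd.sub continuous_const).norm.pow 2).neg.measurable).div
          ((measurable_fst.add_const 1).const_mul 4)
      exact (h1.mul h2).pow_const 2
    have hFms : AEStronglyMeasurable
        (fun t : ℝ => ∫ x in Metric.ball (0 : EuclideanSpace ℝ (Fin n)) r,
          gaussSol n hn k t x ^ 2)
        (volume.restrict (Ioo (0:ℝ) T)) :=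
      (hjm.integral_prod_right'
        (ν := volume.restrict (Metric.ball (0 : EuclideanSpace ℝ (Fin n)) r))).aestronglyMeasurable
    have houter := norm_setIntegral_le_of_norm_le_const (C := Mk k ^ 2 * volr)
      (μ := volume) (s := Ioo (0:ℝ) T)
      (by rw [Real.volume_Ioo]; exact ENNReal.ofReal_lt_top) hinner
    have hIoo : (volume (Ioo (0:ℝ) T)).toReal = T := by
      rw [Real.volume_Ioo, ENNReal.toReal_ofReal (by linarith)]
      simp
    rw [measureReal_def, hIoo] at houter
    calc N k ≤ ‖N k‖ := le_abs_self _
      _ ≤ Mk k ^ 2 * volr * T := houter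
  -- denominator lower bound
  have hDlb : ∀ k : ℕ, r' ≤ (k : ℝ) → Lk k ^ 2 * volδ ≤ D k := by
    intro k hk
    have hk2 : r + 2 * δ ≤ (k : ℝ) := by rw [hr4] at hk; linarith
    have hcont : Continuous fun x : EuclideanSpace ℝ (Fin n) => gaussSol n hn k T x ^ 2 :=
      (gauss_cont hn k T).pow 2
    have hint : IntegrableOn (fun x => gaussSol n hn k T x ^ 2)
        (Metric.ball (0 : EuclideanSpace ℝ (Fin n)) r') volume :=
      (hcont.continuousOn.integrableOn_compact (isCompact_closedBall _ _)).mono_set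
        Metric.ball_subset_closedBall
    have hsub : Metric.ball z δ ⊆ Metric.ball (0 : EuclideanSpace ℝ (Fin n)) r' := by
      intro x hx
      rw [mem_ball_zero_iff]
      have hxz : ‖x - z‖ < δ := by rwa [Metric.mem_ball, dist_eq_norm] at hx
      have h1 : ‖x‖ ≤ ‖x - z‖ + ‖z‖ := by
        calc ‖x‖ = ‖x - z + z‖ := by rw [sub_add_cancel]
          _ ≤ ‖x - z‖ + ‖z‖ := norm_add_le _ _
      have h2 : ‖z‖ = r + 2 * δ := by
        rw [hzdef, he₁, norm_center hn, abs_of_nonneg (by linarith)]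
      rw [hr4]
      linarith
    have h1 : ∫ x in Metric.ball z δ, gaussSol n hn k T x ^ 2 ≤ D k :=
      setIntegral_mono_set hint
        (Eventually.of_forall fun x => sq_nonneg _) (HasSubset.Subset.eventuallyLE hsub)
    have h2 : Lk k ^ 2 * volδ ≤ ∫ x in Metric.ball z δ, gaussSol n hn k T x ^ 2 := by
      have hc := setIntegral_mono_on (f := fun _ => Lk k ^ 2)
        (g := fun x => gaussSol n hn k T x ^ 2)
        (integrableOn_const measure_ball_lt_top.ne) (hint.mono_set hsub)
        measurableSet_ball ?_
      · rwa [setIntegral_const, smul_eq_mul, mul_comm] at hc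
      · intro x hx
        have hxz : ‖x - z‖ ≤ δ := by
          rw [Metric.mem_ball, dist_eq_norm] at hx; linarith
        have hge := gauss_ge hn k hT.le hδ.le hr.le hk2 (x := x) (by rwa [hzdef, he₁] at hxz)
        exact pow_le_pow_left₀ (hLkpos k).le hge 2
    linarith
  have hDpos : ∀ k : ℕ, r' ≤ (k : ℝ) → 0 < D k := fun k hk =>
    lt_of_lt_of_le (by positivity) (hDlb k hk)
  -- the explicit bound and its limit
  set C₀ : ℝ := A ^ 2 * volr * T / (B ^ 2 * volδ) with hC₀def
  have hbound_eq : ∀ k : ℕ, Mk k ^ 2 * volr * T / (Lk k ^ 2 * volδ)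
      = C₀ * rexp ((δ ^ 2 - 2 * δ * ((k : ℝ) - r)) / (2 * (T + 1))) := by
    intro k
    simp only [hMkdef, hLkdef, hC₀def]
    have e1 : (A * rexp (-((k : ℝ) - r) ^ 2 / (4 * (T + 1)))) ^ 2
        = A ^ 2 * rexp (2 * (-((k : ℝ) - r) ^ 2 / (4 * (T + 1)))) := by
      rw [mul_pow, sq (rexp _), ← Real.exp_add]; ring_nf
    have e2 : (B * rexp (-((k : ℝ) - r - δ) ^ 2 / (4 * (T + 1)))) ^ 2
        = B ^ 2 * rexp (2 * (-((k : ℝ) - r - δ) ^ 2 / (4 * (T + 1)))) := by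
      rw [mul_pow, sq (rexp _), ← Real.exp_add]; ring_nf
    rw [e1, e2,
      show (δ ^ 2 - 2 * δ * ((k : ℝ) - r)) / (2 * (T + 1))
        = 2 * (-((k : ℝ) - r) ^ 2 / (4 * (T + 1)))
          - 2 * (-((k : ℝ) - r - δ) ^ 2 / (4 * (T + 1))) from by field_simp; ring,
      Real.exp_sub]
    field_simp
  have hbnd_tendsto : Tendsto
      (fun k : ℕ => C₀ * rexp ((δ ^ 2 - 2 * δ * ((k : ℝ) - r)) / (2 * (T + 1))))
      atTop (nhds 0) := by
    have hexp : Tendsto (fun k : ℕ => (δ ^ 2 - 2 * δ * ((k : ℝ) - r)) / (2 * (T + 1)))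
        atTop atBot := by
      apply Tendsto.atBot_div_const (by positivity : (0:ℝ) < 2 * (T + 1))
      have heq : (fun k : ℕ => δ ^ 2 - 2 * δ * ((k : ℝ) - r))
          = fun k : ℕ => (δ ^ 2 + 2 * δ * r) + (-(2 * δ)) * (k : ℝ) := by
        funext k; ring
      rw [heq]
      apply tendsto_atBot_add_const_left
      exact (tendsto_const_mul_atBot_of_neg (by linarith)).2 tendsto_natCast_atTop_atTop
    have := (Real.tendsto_exp_atBot.comp hexp).const_mul C₀
    simpa using this
  -- part 2
  have h2 : Tendsto (fun k : ℕ => N k / D k) atTop (nhds 0) := by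
    apply tendsto_of_tendsto_of_tendsto_of_le_of_le' tendsto_const_nhds hbnd_tendsto
    · filter_upwards [eventually_ge_atTop ⌈r'⌉₊] with k hk
      have hk' : r' ≤ (k : ℝ) := le_trans (Nat.le_ceil r') (Nat.cast_le.2 hk)
      exact div_nonneg (hNnn k) (hDpos k hk').le
    · filter_upwards [eventually_ge_atTop ⌈r'⌉₊] with k hk
      have hk' : r' ≤ (k : ℝ) := le_trans (Nat.le_ceil r') (Nat.cast_le.2 hk)
      rw [← hbound_eq k]
      exact div_le_div₀ (by positivity) (hNub k hk') (by positivity) (hDlb k hk')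
  refine ⟨?_, h2⟩
  -- part 1
  rintro ⟨C, hC, hobs⟩
  -- the initial data
  set u₀ : ℕ → EuclideanSpace ℝ (Fin n) → ℝ := fun k y =>
    (4 * π) ^ (-(n : ℝ) / 2) * rexp (-‖y - (k : ℝ) • e₁‖ ^ 2 / 4) with hu₀def
  have hheat : ∀ (k : ℕ) {t : ℝ}, 0 < t → ∀ x, heatSol n (u₀ k) t x = gaussSol n hn k t x :=
    fun k t ht x => heat_conv n ht x ((k : ℝ) • e₁)
  have hmem : ∀ k, MemLp (u₀ k) 2 volume := by
    intro k
    have hcont : Continuous (u₀ k) := continuous_const.mul (Real.continuous_exp.comp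
      ((((continuous_id.sub continuous_const).norm.pow 2).neg).div_const _))
    rw [memLp_two_iff_integrable_sq hcont.aestronglyMeasurable]
    have heq : (fun y => u₀ k y ^ 2) = fun y : EuclideanSpace ℝ (Fin n) =>
        ((4 * π) ^ (-(n : ℝ) / 2)) ^ 2 * rexp (-(1/2 : ℝ) * ‖y - (k : ℝ) • e₁‖ ^ 2) := by
      funext y
      rw [hu₀def]
      rw [mul_pow, sq (rexp _), ← Real.exp_add]
      ring_nf
    rw [heq]
    exact (integrable_gauss n (by norm_num : (0:ℝ) < 1/2) _).const_mul _
  -- rewrite the observation inequality with gaussSol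
  have hkey : ∀ k : ℕ, D k ≤ C * N k := by
    intro k
    have h := hobs (u₀ k) (hmem k)
    have hL : ∫ x in Metric.ball (0 : EuclideanSpace ℝ (Fin n)) r', heatSol n (u₀ k) T x ^ 2
        = D k := by
      apply setIntegral_congr_fun measurableSet_ball
      intro x _
      simp only [hheat k hT]
    have hR : ∫ t in Ioo (0:ℝ) T, ∫ x in Metric.ball (0 : EuclideanSpace ℝ (Fin n)) r,
        heatSol n (u₀ k) t x ^ 2 = N k := by
      apply setIntegral_congr_fun measurableSet_Ioo
      intro t ht
      simp only
      apply setIntegral_congr_fun measurableSet_ball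
      intro x _
      simp only [hheat k ht.1]
    rw [hL, hR] at h
    exact h
  -- contradiction
  have hev : ∀ᶠ k : ℕ in atTop, N k / D k < 1 / C :=
    h2.eventually_lt_const (by positivity)
  obtain ⟨k, hk1, hk2⟩ := ((eventually_ge_atTop ⌈r'⌉₊).and hev).exists
  have hk' : r' ≤ (k : ℝ) := le_trans (Nat.le_ceil r') (Nat.cast_le.2 hk1)
  have hD := hDpos k hk'
  have : 1 / C ≤ N k / D k := by
    rw [div_le_div_iff₀ (by positivity) hD]
    have := hkey k
    nlinarith
  linarith
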